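/- Let L be an atomic lattice with bottom element 0̂, and let β ∈ L be neither the bottom element nor an atom. Let β₁,…,β_t be all the elements of L covered by β. Then t ≥ 2, for any i ≠ j we have β = β_i ∨ β_j, and A_β = A_{β₁} ∪ ⋯ ∪ A_{β_t}. -/

import Mathlib

/-- Let `L` be a (finite) atomic lattice with bottom element `⊥`, and let
`β ∈ L` be neither the bottom element nor an atom.  Let `β₁, …, β_t` be all the elements
of `L` covered by `β`.  Then `t ≥ 2`; for any `i ≠ j`, `β = βᵢ ∨ βⱼ`; and
`A_β = A_{β₁} ∪ ⋯ ∪ A_{β_t}` (where `A_α = {i | αᵢ ≤ α}` for the atoms `α₁, …, α_r`). -/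
theorem covBy_structure {L : Type*} [Lattice L] [OrderBot L] [Fintype L] {r : ℕ}
    (a : Fin r → L) (hatom : ∀ i, IsAtom (a i)) (hinj : Function.Injective a)
    (hgen : ∀ x : L, ∃ s : Finset (Fin r), x = s.sup a)
    (β : L) (hb : β ≠ ⊥) (hna : ¬ IsAtom β) :
    2 ≤ {γ : L | γ ⋖ β}.ncard ∧
    (∀ γ δ : L, γ ⋖ β → δ ⋖ β → γ ≠ δ → γ ⊔ δ = β) ∧
    {i : Fin r | a i ≤ β} = ⋃ γ ∈ {γ : L | γ ⋖ β}, {i : Fin r | a i ≤ γ} := by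
  classical
  obtain ⟨s, hs⟩ := hgen β
  set F : Finset (Fin r) := Finset.univ.filter (fun i => a i ≤ β) with hFdef
  have hmemF : ∀ i, i ∈ F ↔ a i ≤ β := by intro i; simp [hFdef]
  have hFsup : β = F.sup a := by
    apply le_antisymm
    · rw [hs]
      apply Finset.sup_le
      intro j hj
      apply Finset.le_sup
      rw [hmemF, hs]
      exact Finset.le_sup hj
    · exact Finset.sup_le fun j hj => (hmemF j).mp hj
  -- existence of a cover above any element strictly below β
  have hcov : ∀ x : L, x < β → ∃ γ, x ≤ γ ∧ γ ⋖ β := by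
    intro x hx
    set T : Finset L := Finset.univ.filter (fun y => x ≤ y ∧ y < β) with hTdef
    have hT : T.Nonempty := ⟨x, by simp [hTdef, hx]⟩
    obtain ⟨m, hm, hmax⟩ := T.exists_maximal hT
    simp only [hTdef, Finset.mem_filter, Finset.mem_univ, true_and] at hm
    refine ⟨m, hm.1, hm.2, ?_⟩
    intro c hc1 hc2
    exact not_le_of_gt hc1 (hmax (y := c) (by
      simp only [hTdef, Finset.mem_filter, Finset.mem_univ, true_and]
      exact ⟨hm.1.trans hc1.le, hc2⟩) hc1.le)
  have hFne : F.Nonempty := by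
    by_contra h
    rw [Finset.not_nonempty_iff_eq_empty] at h
    rw [h, Finset.sup_empty] at hFsup
    exact hb hFsup
  have hlt : ∀ i, a i ≤ β → a i < β := by
    intro i hi
    rcases lt_or_eq_of_le hi with h | h
    · exact h
    · exact absurd (h ▸ hatom i) hna
  obtain ⟨i0, hi0⟩ := hFne
  obtain ⟨γ0, hγ01, hγ02⟩ := hcov (a i0) (hlt i0 ((hmemF i0).mp hi0))
  have hnbγ : ¬ F.sup a ≤ γ0 := by
    rw [← hFsup]
    exact fun h => absurd (lt_of_lt_of_le hγ02.lt h) (lt_irrefl γ0)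
  rw [Finset.sup_le_iff] at hnbγ
  push_neg at hnbγ
  obtain ⟨k, hk, hkγ⟩ := hnbγ
  obtain ⟨δ0, hδ01, hδ02⟩ := hcov (a k) (hlt k ((hmemF k).mp hk))
  have hne0 : γ0 ≠ δ0 := fun h => hkγ (h ▸ hδ01)
  refine ⟨?_, ?_, ?_⟩
  · rw [show (2 : ℕ) = 1 + 1 from rfl]
    rw [Nat.succ_le_iff]
    rw [Set.one_lt_ncard_iff (Set.toFinite _)]
    exact ⟨γ0, δ0, hγ02, hδ02, hne0⟩
  · intro γ δ hγ hδ hne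
    have hdg : ¬ δ ≤ γ := by
      intro h
      rcases lt_or_eq_of_le h with h' | h'
      · exact hδ.2 h' hγ.lt
      · exact hne h'.symm
    have hlt1 : γ < γ ⊔ δ := lt_of_le_of_ne le_sup_left (fun h => hdg (le_sup_right.trans h.symm.le))
    have hle : γ ⊔ δ ≤ β := sup_le hγ.lt.le hδ.lt.le
    rcases lt_or_eq_of_le hle with h | h
    · exact absurd h (hγ.2 hlt1)
    · exact h
  · ext i
    simp only [Set.mem_setOf_eq, Set.mem_iUnion, exists_prop]
    constructor
    · intro hi
      obtain ⟨γ, h1, h2⟩ := hcov (a i) (hlt i hi)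
      exact ⟨γ, h2, h1⟩
    · rintro ⟨γ, hγ, hi⟩
      exact hi.trans hγ.lt.le
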